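/- Let R be a finite (possibly noncommutative) ring whose additive group is a p-group isomorphic to ℤ/p^{α_1}ℤ ⊕ ... ⊕ ℤ/p^{α_r}ℤ. Let g be an n-variable polynomial over R written as a sum of monomials, each monomial involving at most k distinct variables. If v ∈ R is attained by g at some point (c_1, ..., c_n) ∈ R^n, then v is attained by g at a point (c'_1, ..., c'_n) in which at most k·Σ_{j=1}^r (p^{α_j} - 1) coordinates are nonzero. -/

import Mathlib

/-- An atom of a monomial: a ring constant or a variable. -/
def evalAtom {R : Type} {n : ℕ} [NonUnitalRing R] (c : Fin n → R) : R ⊕ Fin n → R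
  | .inl a => a
  | .inr i => c i

/-- Product of a (canonical-form) monomial `z₁ ⋯ z_t`; the empty product is `0`. -/
def evalMonList {R : Type} {n : ℕ} [NonUnitalRing R] (c : Fin n → R) :
    List (R ⊕ Fin n) → R
  | [] => 0
  | [z] => evalAtom c z
  | z :: zs => evalAtom c z * evalMonList c zs

/-- A monomial: a possibly negated product of atoms. -/
structure Mon (R : Type) (n : ℕ) : Type where
  sign : Bool
  factors : List (R ⊕ Fin n)

/-- Evaluation of a monomial. -/
def Mon.eval {R : Type} {n : ℕ} [NonUnitalRing R] (c : Fin n → R) (m : Mon R n) : R :=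
  if m.sign then -(evalMonList c m.factors) else evalMonList c m.factors

/-- The set of distinct variables occurring in a monomial. -/
def Mon.vars {R : Type} {n : ℕ} (m : Mon R n) : Finset (Fin n) :=
  (m.factors.filterMap (fun z => match z with | .inl _ => none | .inr i => some i)).toFinset

/-- A standard polynomial: a formal sum of monomials. -/
abbrev StdPoly (R : Type) (n : ℕ) : Type := List (Mon R n)

/-- Evaluation of a standard polynomial. -/
def StdPoly.eval {R : Type} {n : ℕ} [NonUnitalRing R] (c : Fin n → R)
    (P : StdPoly R n) : R :=
  (P.map (Mon.eval c)).sum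

open Finset

section GA

variable {p : ℕ} {r : ℕ} {α : Fin r → ℕ}

/-- The group algebra over `ZMod p` of `⨁ ℤ/p^{αⱼ}`. -/
abbrev GA (p : ℕ) {r : ℕ} (α : Fin r → ℕ) : Type :=
  AddMonoidAlgebra (ZMod p) (∀ j, ZMod (p ^ α j))

/-- The canonical group element `x^g` in the group algebra. -/
noncomputable def Xg (p : ℕ) {r : ℕ} (α : Fin r → ℕ) (g : ∀ j, ZMod (p ^ α j)) : GA p α :=
  AddMonoidAlgebra.single g 1

lemma Xg_zero : Xg p α 0 = 1 := AddMonoidAlgebra.one_def.symm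

lemma Xg_add (a b : ∀ j, ZMod (p ^ α j)) : Xg p α (a + b) = Xg p α a * Xg p α b := by
  simp [Xg, AddMonoidAlgebra.single_mul_single]

lemma Xg_sum {ι : Type*} (s : Finset ι) (f : ι → ∀ j, ZMod (p ^ α j)) :
    Xg p α (∑ i ∈ s, f i) = ∏ i ∈ s, Xg p α (f i) := by
  induction s using Finset.cons_induction with
  | empty => simpa using Xg_zero
  | cons i s hi ih => rw [Finset.sum_cons, Finset.prod_cons, Xg_add, ih]

lemma Xg_pow (g : ∀ j, ZMod (p ^ α j)) (m : ℕ) : Xg p α g ^ m = Xg p α (m • g) := by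
  simp [Xg, AddMonoidAlgebra.single_pow]

lemma charGA (hp : p.Prime) : CharP (GA p α) p := by
  haveI := Fact.mk hp
  have h : Function.Injective (algebraMap (ZMod p) (GA p α)) := by
    rw [AddMonoidAlgebra.coe_algebraMap]
    intro x y hxy
    have hxy' : AddMonoidAlgebra.single (0 : ∀ j, ZMod (p ^ α j)) x
        = AddMonoidAlgebra.single 0 y := by simpa using hxy
    exact AddMonoidAlgebra.single_right_inj.1 hxy'
  exact charP_of_injective_algebraMap h p

/-- `t_j = x^{e_j} - 1`. -/
noncomputable def tj (p : ℕ) {r : ℕ} (α : Fin r → ℕ) (j : Fin r) : GA p α :=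
  Xg p α (Pi.single j 1) - 1

lemma tj_pow_eq_zero (hp : p.Prime) (j : Fin r) : tj p α j ^ (p ^ α j) = 0 := by
  haveI := Fact.mk hp
  haveI := charGA (α := α) hp
  rw [tj, sub_pow_char_pow, one_pow, Xg_pow]
  have h : (p ^ α j) • (Pi.single j 1 : ∀ j, ZMod (p ^ α j)) = 0 := by
    ext j'
    rcases eq_or_ne j' j with rfl | h
    · simp [nsmul_eq_mul]
    · simp [Pi.single_eq_of_ne h]
  rw [h, Xg_zero, sub_self]

lemma Xg_sub_one_mem (hp : p.Prime) (g : ∀ j, ZMod (p ^ α j)) :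
    ∃ u : Fin r → GA p α, Xg p α g - 1 = ∑ j, tj p α j * u j := by
  set P : (∀ j, ZMod (p ^ α j)) → Prop :=
    fun g => ∃ u : Fin r → GA p α, Xg p α g - 1 = ∑ j, tj p α j * u j with hP
  have hzero : P 0 := ⟨0, by simp [Xg_zero]⟩
  have hadd : ∀ a b, P a → P b → P (a + b) := by
    rintro a b ⟨ua, ha⟩ ⟨ub, hb⟩
    refine ⟨fun j => Xg p α a * ub j + ua j, ?_⟩
    rw [Xg_add]
    have h1 : Xg p α a * Xg p α b - 1 = Xg p α a * (Xg p α b - 1) + (Xg p α a - 1) := by ring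
    rw [h1, ha, hb, Finset.mul_sum, ← Finset.sum_add_distrib]
    exact Finset.sum_congr rfl fun j _ => by ring
  have hnsmul : ∀ (m : ℕ) a, P a → P (m • a) := by
    intro m a ha
    induction m with
    | zero => simpa using hzero
    | succ m ih => rw [succ_nsmul]; exact hadd _ _ ih ha
  have hone : ∀ j : Fin r, P (Pi.single j 1) := by
    intro j
    refine ⟨fun j' => if j' = j then 1 else 0, ?_⟩
    rw [Finset.sum_eq_single j]
    · simp [tj]
    · intro b _ hb; simp [hb]
    · simp
  have hsingle : ∀ (j : Fin r) (x : ZMod (p ^ α j)), P (Pi.single j x) := by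
    intro j x
    haveI : NeZero (p ^ α j) := ⟨pow_ne_zero _ hp.ne_zero⟩
    have hx : Pi.single j x = (x.val) • (Pi.single j 1 : ∀ j, ZMod (p ^ α j)) := by
      ext j'
      rcases eq_or_ne j' j with rfl | h
      · simp [nsmul_eq_mul, ZMod.natCast_rightInverse x]
      · simp [Pi.single_eq_of_ne h]
    rw [hx]
    exact hnsmul _ _ (hone j)
  have hsum : ∀ (s : Finset (Fin r)) (f : Fin r → ∀ j, ZMod (p ^ α j)),
      (∀ j ∈ s, P (f j)) → P (∑ j ∈ s, f j) := by
    intro s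
    induction s using Finset.cons_induction with
    | empty => intro f _; simpa using hzero
    | cons i s hi ih =>
      intro f hf
      rw [Finset.sum_cons]
      exact hadd _ _ (hf i (Finset.mem_cons_self i s)) (ih f fun j hj => hf j (Finset.mem_cons.2 (Or.inr hj)))
  have := hsum Finset.univ (fun j => Pi.single j (g j)) (fun j _ => hsingle j (g j))
  rwa [Finset.univ_sum_single] at this

lemma prod_tj_form_eq_zero (hp : p.Prime) {ι : Type*} [DecidableEq ι]
    (F : Finset ι) (y : ι → GA p α)
    (hy : ∀ i ∈ F, ∃ u : Fin r → GA p α, y i = ∑ j, tj p α j * u j)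
    (hF : ∑ j, (p ^ α j - 1) < F.card) :
    ∏ i ∈ F, y i = 0 := by
  choose u hu using hy
  set U : ι → Fin r → GA p α := fun i => if h : i ∈ F then u i h else 0 with hU
  have hrw : ∏ i ∈ F, y i = ∏ i ∈ F, ∑ j : Fin r, tj p α j * U i j := by
    refine Finset.prod_congr rfl fun i hi => ?_
    rw [hu i hi]
    exact Finset.sum_congr rfl fun j _ => by rw [hU]; simp [dif_pos hi]
  rw [hrw, Finset.prod_sum]
  refine Finset.sum_eq_zero fun σ hσ => ?_
  rw [Finset.prod_mul_distrib]
  suffices h : ∏ x ∈ F.attach, tj p α (σ x.1 x.2) = 0 by rw [h, zero_mul]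
  set τ : {x // x ∈ F} → Fin r := fun x => σ x.1 x.2 with hτ
  have hcard : ∑ j : Fin r, (F.attach.filter fun x => τ x = j).card = F.card := by
    rw [← Finset.card_attach (s := F)]
    exact (Finset.card_eq_sum_card_fiberwise (fun x _ => Finset.mem_univ (τ x))).symm
  have hex : ∃ j, p ^ α j ≤ (F.attach.filter fun x => τ x = j).card := by
    by_contra hno
    push_neg at hno
    have h2 : F.card ≤ ∑ j, (p ^ α j - 1) := by
      rw [← hcard]
      refine Finset.sum_le_sum fun j _ => ?_
      have := hno j
      omega
    omega
  obtain ⟨j, hj⟩ := hex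
  rw [← Finset.prod_filter_mul_prod_filter_not F.attach (fun x => τ x = j)]
  have h1 : ∏ x ∈ F.attach.filter (fun x => τ x = j), tj p α (τ x)
      = tj p α j ^ (F.attach.filter (fun x => τ x = j)).card := by
    rw [Finset.prod_congr rfl (fun x hx => by rw [(Finset.mem_filter.mp hx).2])]
    exact Finset.prod_const _
  have h2 : tj p α j ^ (F.attach.filter (fun x => τ x = j)).card = 0 := by
    rw [← Nat.add_sub_cancel' hj, pow_add, tj_pow_eq_zero hp, zero_mul]
  rw [h1, h2, zero_mul]

end GA

section Comb

variable {p : ℕ} {r : ℕ} {α : Fin r → ℕ}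

lemma sum_sign_interval {ι : Type*} [DecidableEq ι] (K : Type*) [CommRing K]
    (B T : Finset ι) (hBT : B ⊆ T) :
    ∑ U ∈ T.powerset.filter (fun U => B ⊆ U), (-1 : K) ^ U.card =
      if B = T then (-1 : K) ^ T.card else 0 := by
  have hbij : ∑ U ∈ T.powerset.filter (fun U => B ⊆ U), (-1 : K) ^ U.card
      = ∑ V ∈ (T \ B).powerset, (-1 : K) ^ (V.card + B.card) := by
    refine Finset.sum_nbij' (fun U => U \ B) (fun V => V ∪ B) ?_ ?_ ?_ ?_ ?_
    · intro U hU
      rw [Finset.mem_filter, Finset.mem_powerset] at hU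
      exact Finset.mem_powerset.2 (Finset.sdiff_subset_sdiff hU.1 (Finset.Subset.refl B))
    · intro V hV
      rw [Finset.mem_powerset] at hV
      rw [Finset.mem_filter, Finset.mem_powerset]
      exact ⟨Finset.union_subset (hV.trans (Finset.sdiff_subset)) hBT, Finset.subset_union_right⟩
    · intro U hU
      rw [Finset.mem_filter] at hU
      exact Finset.sdiff_union_of_subset hU.2
    · intro V hV
      rw [Finset.mem_powerset] at hV
      exact Finset.union_sdiff_cancel_right (Finset.disjoint_of_subset_left hV Finset.sdiff_disjoint)
    · intro U hU
      rw [Finset.mem_filter] at hU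
      rw [Finset.card_sdiff_add_card_eq_card hU.2]
  rw [hbij]
  have hZ : (∑ V ∈ (T \ B).powerset, (-1 : K) ^ V.card) = if T \ B = ∅ then 1 else 0 := by
    have hint := Finset.sum_powerset_neg_one_pow_card (x := T \ B)
    have := congrArg (Int.cast : ℤ → K) hint
    push_cast at this
    exact this
  have hsplit : ∑ V ∈ (T \ B).powerset, (-1 : K) ^ (V.card + B.card)
      = (∑ V ∈ (T \ B).powerset, (-1 : K) ^ V.card) * (-1 : K) ^ B.card := by
    rw [Finset.sum_mul]
    exact Finset.sum_congr rfl fun V _ => by rw [pow_add]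
  rw [hsplit, hZ]
  rcases eq_or_ne B T with rfl | h
  · simp
  · have : T \ B ≠ ∅ := by
      intro hemp
      exact h (Finset.Subset.antisymm hBT (by
        intro x hx
        by_contra hxB
        exact absurd hemp (Finset.ne_empty_of_mem (Finset.mem_sdiff.2 ⟨hx, hxB⟩))))
    rw [if_neg this, if_neg h, zero_mul]

lemma step_lemma (hp : p.Prime) {ι : Type*} [DecidableEq ι] (k : ℕ)
    (w : Finset ι → ∀ j, ZMod (p ^ α j)) (hw : ∀ A, w A ≠ 0 → A.card ≤ k)
    (T : Finset ι) (hT : k * ∑ j, (p ^ α j - 1) < T.card) :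
    ∃ U, U ⊆ T ∧ U ≠ T ∧ ∑ A ∈ U.powerset, w A = ∑ A ∈ T.powerset, w A := by
  haveI := Fact.mk hp
  by_contra hcon
  push_neg at hcon
  set f : Finset ι → ∀ j, ZMod (p ^ α j) := fun U => ∑ A ∈ U.powerset, w A with hf
  set y : Finset ι → GA p α := fun A => Xg p α (w A) - 1 with hy
  have hXf : ∀ U : Finset ι, Xg p α (f U) = ∑ F ∈ U.powerset.powerset, ∏ A ∈ F, y A := by
    intro U
    rw [hf, Xg_sum]
    calc ∏ A ∈ U.powerset, Xg p α (w A) = ∏ A ∈ U.powerset, (y A + 1) := by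
          refine Finset.prod_congr rfl fun A _ => by rw [hy]; ring
      _ = ∑ F ∈ U.powerset.powerset, (∏ A ∈ F, y A) * ∏ A ∈ U.powerset \ F, 1 :=
          Finset.prod_add _ _ _
      _ = _ := by simp
  set Z : GA p α :=
    ∑ U ∈ T.powerset, AddMonoidAlgebra.single (f U) ((-1 : ZMod p) ^ U.card) with hZdef
  -- Z = 0
  have hprodzero : ∀ F ∈ T.powerset.powerset, F.sup id = T → ∏ A ∈ F, y A = 0 := by
    intro F hF hsup
    by_cases hzero : ∃ A ∈ F, w A = 0
    · obtain ⟨A, hA, hwA⟩ := hzero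
      refine Finset.prod_eq_zero hA ?_
      rw [hy]; simp only [hwA, Xg_zero, sub_self]
    · push_neg at hzero
      have hcards : T.card ≤ k * F.card := by
        calc T.card = (F.sup id).card := by rw [hsup]
          _ ≤ ∑ A ∈ F, A.card := by
              rw [Finset.sup_eq_biUnion]
              exact Finset.card_biUnion_le
          _ ≤ ∑ A ∈ F, k := Finset.sum_le_sum fun A hA => hw A (hzero A hA)
          _ = k * F.card := by rw [Finset.sum_const, smul_eq_mul, mul_comm]
      have hFcard : ∑ j, (p ^ α j - 1) < F.card :=
        Nat.lt_of_mul_lt_mul_left (lt_of_lt_of_le hT hcards)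
      exact prod_tj_form_eq_zero hp F y
        (fun A _ => Xg_sub_one_mem hp (w A)) hFcard
  have hZ0 : Z = 0 := by
    have hsingle : ∀ U : Finset ι,
        AddMonoidAlgebra.single (f U) ((-1 : ZMod p) ^ U.card)
          = ((-1 : ZMod p) ^ U.card) • Xg p α (f U) := by
      intro U
      rw [Xg, AddMonoidAlgebra.smul_single, smul_eq_mul, mul_one]
    calc Z = ∑ U ∈ T.powerset, ((-1 : ZMod p) ^ U.card) • Xg p α (f U) := by
          rw [hZdef]; exact Finset.sum_congr rfl fun U _ => hsingle U
      _ = ∑ U ∈ T.powerset, ∑ F ∈ U.powerset.powerset,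
            ((-1 : ZMod p) ^ U.card) • ∏ A ∈ F, y A := by
          refine Finset.sum_congr rfl fun U _ => ?_
          rw [hXf U, Finset.smul_sum]
      _ = ∑ U ∈ T.powerset, ∑ F ∈ T.powerset.powerset,
            (if F.sup id ⊆ U then ((-1 : ZMod p) ^ U.card) • ∏ A ∈ F, y A else 0) := by
          refine Finset.sum_congr rfl fun U hU => ?_
          rw [Finset.mem_powerset] at hU
          have hmono : U.powerset.powerset ⊆ T.powerset.powerset :=
            Finset.powerset_mono.2 (Finset.powerset_mono.2 hU)
          have h1 : ∑ F ∈ U.powerset.powerset, ((-1 : ZMod p) ^ U.card) • ∏ A ∈ F, y A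
              = ∑ F ∈ U.powerset.powerset,
                (if F.sup id ⊆ U then ((-1 : ZMod p) ^ U.card) • ∏ A ∈ F, y A else 0) := by
            refine Finset.sum_congr rfl fun F hF => ?_
            rw [Finset.mem_powerset] at hF
            have hle : F.sup id ⊆ U := by
              show F.sup id ≤ U
              exact Finset.sup_le fun A hA => Finset.mem_powerset.1 (hF hA)
            rw [if_pos hle]
          rw [h1]
          refine Finset.sum_subset hmono fun F hF hFU => ?_
          rw [if_neg]
          intro hsub
          refine hFU (Finset.mem_powerset.2 fun A hA => Finset.mem_powerset.2 ?_)
          exact le_trans (Finset.le_sup (f := id) hA) hsub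
      _ = ∑ F ∈ T.powerset.powerset, ∑ U ∈ T.powerset,
            (if F.sup id ⊆ U then ((-1 : ZMod p) ^ U.card) • ∏ A ∈ F, y A else 0) :=
          Finset.sum_comm
      _ = 0 := by
          refine Finset.sum_eq_zero fun F hF => ?_
          have hBT : F.sup id ⊆ T := by
            show F.sup id ≤ T
            rw [Finset.mem_powerset] at hF
            exact Finset.sup_le fun A hA => Finset.mem_powerset.1 (hF hA)
          rw [← Finset.sum_filter]
          rw [show (∑ U ∈ T.powerset.filter (fun U => F.sup id ⊆ U),
                ((-1 : ZMod p) ^ U.card) • ∏ A ∈ F, y A)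
              = (∑ U ∈ T.powerset.filter (fun U => F.sup id ⊆ U),
                ((-1 : ZMod p) ^ U.card)) • ∏ A ∈ F, y A from
            (Finset.sum_smul).symm]
          rw [sum_sign_interval (ZMod p) (F.sup id) T hBT]
          rcases eq_or_ne (F.sup id) T with heq | hne
          · rw [hprodzero F hF heq, smul_zero]
          · rw [if_neg hne, zero_smul]
  -- coefficient of f T in Z is (-1)^T.card
  have hcoeff : Z.coeff (f T) = (-1 : ZMod p) ^ T.card := by
    rw [hZdef, AddMonoidAlgebra.coeff_sum, Finset.sum_apply']
    rw [Finset.sum_eq_single_of_mem T (Finset.mem_powerset.2 (Finset.Subset.refl T))]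
    · exact Finsupp.single_eq_same
    · intro U hU hUne
      rw [Finset.mem_powerset] at hU
      have : f U ≠ f T := hcon U hU hUne
      exact Finsupp.single_eq_of_ne this.symm
  rw [hZ0] at hcoeff
  have : ((-1 : ZMod p) ^ T.card) ≠ 0 :=
    pow_ne_zero _ (neg_ne_zero.mpr one_ne_zero)
  exact this hcoeff.symm

lemma key_lemma (hp : p.Prime) {ι : Type*} [DecidableEq ι] (k : ℕ)
    (w : Finset ι → ∀ j, ZMod (p ^ α j)) (hw : ∀ A, w A ≠ 0 → A.card ≤ k)
    (T : Finset ι) :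
    ∃ U, U ⊆ T ∧ U.card ≤ k * ∑ j, (p ^ α j - 1) ∧
      ∑ A ∈ U.powerset, w A = ∑ A ∈ T.powerset, w A := by
  induction T using Finset.strongInductionOn with
  | _ T ih =>
    by_cases hc : T.card ≤ k * ∑ j, (p ^ α j - 1)
    · exact ⟨T, Finset.Subset.refl T, hc, rfl⟩
    · push_neg at hc
      obtain ⟨U, hUT, hUne, hUeq⟩ := step_lemma hp k w hw T hc
      obtain ⟨U', hU'U, hU'card, hU'eq⟩ := ih U (Finset.ssubset_iff_subset_ne.2 ⟨hUT, hUne⟩)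
      exact ⟨U', hU'U.trans hUT, hU'card, hU'eq.trans hUeq⟩

end Comb

section MonLemmas

variable {R : Type} {n : ℕ} [NonUnitalRing R]

lemma evalMonList_cons (c : Fin n → R) (z : R ⊕ Fin n) (zs : List (R ⊕ Fin n)) (h : zs ≠ []) :
    evalMonList c (z :: zs) = evalAtom c z * evalMonList c zs := by
  cases zs with
  | nil => exact absurd rfl h
  | cons a l => rfl

lemma evalMonList_congr {c c' : Fin n → R} (L : List (R ⊕ Fin n))
    (h : ∀ i : Fin n, Sum.inr i ∈ L → c i = c' i) :
    evalMonList c L = evalMonList c' L := by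
  induction L with
  | nil => rfl
  | cons z zs ih =>
    have hatom : evalAtom c z = evalAtom c' z := by
      cases z with
      | inl a => rfl
      | inr i => exact h i List.mem_cons_self
    cases zs with
    | nil => exact hatom
    | cons a l =>
      rw [evalMonList_cons c z _ (by simp), evalMonList_cons c' z _ (by simp), hatom,
        ih (fun i hi => h i (List.mem_cons_of_mem _ hi))]

lemma evalMonList_eq_zero {c : Fin n → R} (L : List (R ⊕ Fin n)) (i : Fin n)
    (hi : Sum.inr i ∈ L) (h0 : c i = 0) :
    evalMonList c L = 0 := by
  induction L with
  | nil => rfl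
  | cons z zs ih =>
    cases zs with
    | nil =>
      rcases List.mem_singleton.1 hi with rfl
      simpa [evalMonList, evalAtom] using h0
    | cons a l =>
      rw [evalMonList_cons c z _ (by simp)]
      rcases List.mem_cons.1 hi with rfl | hmem
      · simp [evalAtom, h0]
      · rw [ih hmem, mul_zero]

omit [NonUnitalRing R] in
lemma Mon.mem_vars {m : Mon R n} {i : Fin n} :
    i ∈ m.vars ↔ Sum.inr i ∈ m.factors := by
  simp only [Mon.vars, List.mem_toFinset, List.mem_filterMap]
  constructor
  · rintro ⟨z, hz, hm⟩
    cases z with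
    | inl a => simp at hm
    | inr j => simp at hm; subst hm; exact hz
  · intro h
    exact ⟨Sum.inr i, h, rfl⟩

lemma Mon.eval_restrict (c : Fin n → R) (U : Finset (Fin n)) (m : Mon R n) :
    Mon.eval (fun i => if i ∈ U then c i else 0) m
      = if m.vars ⊆ U then Mon.eval c m else 0 := by
  set c' : Fin n → R := fun i => if i ∈ U then c i else 0 with hc'
  by_cases hsub : m.vars ⊆ U
  · rw [if_pos hsub]
    have : evalMonList c' m.factors = evalMonList c m.factors := by
      refine evalMonList_congr _ fun i hi => ?_
      have : i ∈ U := hsub (Mon.mem_vars.2 hi)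
      simp [hc', this]
    rw [Mon.eval, Mon.eval, this]
  · rw [if_neg hsub]
    obtain ⟨i, hiv, hiU⟩ := Finset.not_subset.1 hsub
    have h0 : evalMonList c' m.factors = 0 :=
      evalMonList_eq_zero _ i (Mon.mem_vars.1 hiv) (by simp [hc', hiU])
    rw [Mon.eval, h0]
    split <;> simp

lemma StdPoly.eval_restrict (c : Fin n → R) (U : Finset (Fin n)) (g : StdPoly R n) :
    StdPoly.eval (fun i => if i ∈ U then c i else 0) g
      = ∑ A ∈ U.powerset, ((g.map (fun m => if m.vars = A then Mon.eval c m else 0)).sum) := by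
  induction g with
  | nil => simp [StdPoly.eval]
  | cons m tl ih =>
    have hLHS : StdPoly.eval (fun i => if i ∈ U then c i else 0) (m :: tl)
        = Mon.eval (fun i => if i ∈ U then c i else 0) m
          + StdPoly.eval (fun i => if i ∈ U then c i else 0) tl := by
      simp [StdPoly.eval]
    rw [hLHS, ih, Mon.eval_restrict]
    have hRHS : ∑ A ∈ U.powerset,
        (((m :: tl).map (fun m' => if m'.vars = A then Mon.eval c m' else 0)).sum)
        = ∑ A ∈ U.powerset, ((if m.vars = A then Mon.eval c m else 0)
            + ((tl.map (fun m' => if m'.vars = A then Mon.eval c m' else 0)).sum)) := by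
      simp
    rw [hRHS, Finset.sum_add_distrib]
    congr 1
    rw [Finset.sum_ite_eq U.powerset m.vars (fun _ => Mon.eval c m)]
    simp [Finset.mem_powerset]

end MonLemmas

/-- If the additive group of the finite ring `R` is `ℤ/p^{α₁}ℤ ⊕ ⋯ ⊕ ℤ/p^{α_r}ℤ` and
every monomial of `g` involves at most `k` distinct variables, then every value `v`
attained by `g` is attained at a point with at most `k·∑ (p^{αⱼ}-1)` nonzero
coordinates. -/
theorem value_attained_on_small_support {R : Type} [NonUnitalRing R] [Fintype R]
    [DecidableEq R] (p : ℕ) (hp : p.Prime) (r : ℕ) (α : Fin r → ℕ) (hα : ∀ j, 0 < α j)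
    (e : R ≃+ ∀ j, ZMod (p ^ α j))
    (n k : ℕ) (g : StdPoly R n) (hg : ∀ m ∈ g, m.vars.card ≤ k)
    (v : R) (c : Fin n → R) (hv : StdPoly.eval c g = v) :
    ∃ c' : Fin n → R,
      (Finset.univ.filter fun i => c' i ≠ 0).card ≤ k * ∑ j, (p ^ α j - 1) ∧
      StdPoly.eval c' g = v := by
  classical
  set w : Finset (Fin n) → (∀ j, ZMod (p ^ α j)) :=
    fun A => e ((g.map (fun m => if m.vars = A then Mon.eval c m else 0)).sum) with hwdef
  have hw : ∀ A, w A ≠ 0 → A.card ≤ k := by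
    intro A hA
    have hsum : (g.map (fun m => if m.vars = A then Mon.eval c m else 0)).sum ≠ 0 := by
      intro h0
      apply hA
      rw [hwdef]
      simp only [h0, map_zero]
    have hex : ∃ m ∈ g, (if m.vars = A then Mon.eval c m else 0) ≠ 0 := by
      by_contra hno
      push_neg at hno
      apply hsum
      refine List.sum_eq_zero fun x hx => ?_
      obtain ⟨m, hm, rfl⟩ := List.mem_map.1 hx
      exact hno m hm
    obtain ⟨m, hm, hne⟩ := hex
    have hvars : m.vars = A := by
      by_contra hvne
      exact hne (if_neg hvne)
    rw [← hvars]
    exact hg m hm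
  obtain ⟨U, hU, hUcard, hUeq⟩ := key_lemma hp k w hw (Finset.univ : Finset (Fin n))
  refine ⟨fun i => if i ∈ U then c i else 0, ?_, ?_⟩
  · refine le_trans (Finset.card_le_card ?_) hUcard
    intro i hi
    rw [Finset.mem_filter] at hi
    by_contra hiU
    exact hi.2 (by simp [hiU])
  · have h3 : e (StdPoly.eval (fun i => if i ∈ U then c i else 0) g)
        = ∑ A ∈ U.powerset, w A := by
      rw [StdPoly.eval_restrict c U g, map_sum]
    have hcongr : (fun i : Fin n => if i ∈ (Finset.univ : Finset (Fin n)) then c i else 0) = c := by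
      funext i; simp
    have h4 : e (StdPoly.eval c g)
        = ∑ A ∈ (Finset.univ : Finset (Fin n)).powerset, w A := by
      conv_lhs => rw [← hcongr]
      rw [StdPoly.eval_restrict c Finset.univ g, map_sum]
    rw [← hv]
    exact e.injective (h3.trans (hUeq.trans h4.symm))
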